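/- arXiv:1409.7198 — 6 statements merged into one kernel-verified Lean document; each statement's English description precedes it below -/
import Mathlib

section
/- Let n be a positive integer and let u : ZMod n → ℝ be a ±1 vector generating a circulant Hadamard matrix. Define M : (ZMod n → ZMod 2) → ℝ by M(γ) = u^γ. Then M satisfies the circulant system: for every γ : ZMod n → ZMod 2 and every integer d with 1 ≤ d ≤ ⌊n/2⌋, ∑_{j ∈ ZMod n} M(γ + π_j + π_{j+d}) = 0. -/
/-- `u` generates a circulant Hadamard matrix: all entries are `±1` and all
non-trivial cyclic autocorrelations vanish. -/
def GeneratesCircHadamard (n : ℕ) [NeZero n] (u : ZMod n → ℝ) : Prop :=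
  (∀ j, u j = 1 ∨ u j = -1) ∧
    ∀ d : ℕ, 1 ≤ d → d ≤ n - 1 → ∑ j : ZMod n, u j * u (j + (d : ZMod n)) = 0

/-- `π_j`, the indicator character of `{j}`. -/
def piChar (n : ℕ) (j : ZMod n) : ZMod n → ZMod 2 :=
  fun i => if i = j then 1 else 0

/-- `u^γ = ∏_{j : γ j = 1} u j`. -/
def uPow (n : ℕ) [NeZero n] (u : ZMod n → ℝ) (γ : ZMod n → ZMod 2) : ℝ :=
  ∏ j : ZMod n, if γ j = 1 then u j else 1

lemma uPow_flip (n : ℕ) [NeZero n] (u : ZMod n → ℝ)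
    (hu1 : ∀ j, u j = 1 ∨ u j = -1) (γ : ZMod n → ZMod 2) (a : ZMod n) :
    uPow n u (γ + piChar n a) = uPow n u γ * u a := by
  unfold uPow
  rw [Fintype.prod_eq_mul_prod_compl a, Fintype.prod_eq_mul_prod_compl a (fun j => if γ j = 1 then u j else 1)]
  have hcompl : ∀ b ∈ ({a}ᶜ : Finset (ZMod n)),
      (if (γ + piChar n a) b = 1 then u b else 1) = (if γ b = 1 then u b else 1) := by
    intro b hb
    simp only [Finset.mem_compl, Finset.mem_singleton] at hb
    simp [piChar, hb, Pi.add_apply]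
  rw [Finset.prod_congr rfl hcompl]
  have ha : (if (γ + piChar n a) a = 1 then u a else 1) =
      (if γ a = 1 then u a else 1) * u a := by
    simp only [Pi.add_apply, piChar, if_pos rfl]
    have hsq : u a * u a = 1 := by rcases hu1 a with h | h <;> rw [h] <;> norm_num
    rcases (by decide : ∀ x : ZMod 2, x = 0 ∨ x = 1) (γ a) with h | h <;> simp [h] ; rw [hsq]
  rw [ha]; ring

/-- If `u` generates a circulant Hadamard matrix, then `M(γ) = u^γ` satisfies
the circulant system: for every character `γ` and every `1 ≤ d ≤ ⌊n/2⌋`,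
`∑_j M(γ + π_j + π_{j+d}) = 0`. -/
theorem uPow_satisfies_circulant_system (n : ℕ) [NeZero n]
    (u : ZMod n → ℝ) (hu : GeneratesCircHadamard n u) :
    ∀ γ : ZMod n → ZMod 2, ∀ d : ℕ, 1 ≤ d → d ≤ n / 2 →
      ∑ j : ZMod n,
        uPow n u (γ + piChar n j + piChar n (j + (d : ZMod n))) = 0 := by
  intro γ d hd1 hd2
  have hn : 1 ≤ n := Nat.one_le_iff_ne_zero.mpr (NeZero.ne n)
  have hd' : d ≤ n - 1 := by omega
  have key : ∀ j : ZMod n,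
      uPow n u (γ + piChar n j + piChar n (j + (d : ZMod n))) =
        uPow n u γ * (u j * u (j + (d : ZMod n))) := by
    intro j
    rw [uPow_flip n u hu.1, uPow_flip n u hu.1]; ring
  rw [Finset.sum_congr rfl (fun j _ => key j), ← Finset.mul_sum, hu.2 d hd1 hd', mul_zero]
end

section
/- Let n be a positive integer and let u : ZMod n → ℝ be a ±1 vector generating a circulant Hadamard matrix. Define M : (ZMod n → ZMod 2) → ℝ by M(γ) = u^γ. Then for every γ : ZMod n → ZMod 2 one has ∑_{ρ : ZMod n → ZMod 2} M(γ + ρ) · S(ρ) = 0, i.e. the convolution S ∗ M vanishes identically. -/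
/-- The coefficient function `S`:
`S(γ) = ∑_{d=1}^{n-1} #{(j,k) : π_j + π_{j+d} + π_k + π_{k+d} = γ}`. -/
def Sfun (n : ℕ) [NeZero n] (γ : ZMod n → ZMod 2) : ℝ :=
  ∑ d ∈ Finset.Icc 1 (n - 1),
    ((Finset.univ.filter fun jk : ZMod n × ZMod n =>
        piChar n jk.1 + piChar n (jk.1 + (d : ZMod n)) +
          piChar n jk.2 + piChar n (jk.2 + (d : ZMod n)) = γ).card : ℝ)

lemma uPow_add (n : ℕ) [NeZero n] (u : ZMod n → ℝ) (hu : ∀ j, u j = 1 ∨ u j = -1)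
    (γ ρ : ZMod n → ZMod 2) : uPow n u (γ + ρ) = uPow n u γ * uPow n u ρ := by
  unfold uPow
  rw [← Finset.prod_mul_distrib]
  refine Finset.prod_congr rfl fun j _ => ?_
  have hsq : u j * u j = 1 := by rcases hu j with h | h <;> rw [h] <;> ring
  have h2 : ∀ a : ZMod 2, a = 0 ∨ a = 1 := by decide
  rcases h2 (γ j) with h1 | h1 <;> rcases h2 (ρ j) with h3 | h3 <;>
    simp [Pi.add_apply, h1, h3, hsq]

lemma uPow_piChar (n : ℕ) [NeZero n] (u : ZMod n → ℝ) (j : ZMod n) :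
    uPow n u (piChar n j) = u j := by
  unfold uPow piChar
  rw [Finset.prod_congr rfl (fun i _ => ?_)]
  · exact Finset.prod_ite_eq' Finset.univ j u |>.trans (by simp)
  · by_cases h : i = j <;> simp [h]

/-- If `u` generates a circulant Hadamard matrix and `M(γ) = u^γ`, then the
convolution `S ∗ M` vanishes identically:
`∑_ρ M(γ + ρ) S(ρ) = 0` for every `γ`. -/
theorem conv_S_uPow_eq_zero (n : ℕ) [NeZero n]
    (u : ZMod n → ℝ) (hu : GeneratesCircHadamard n u) :
    ∀ γ : ZMod n → ZMod 2,
      ∑ ρ : ZMod n → ZMod 2, uPow n u (γ + ρ) * Sfun n ρ = 0 := by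
  intro γ
  have key : ∑ ρ : ZMod n → ZMod 2, uPow n u ρ * Sfun n ρ = 0 := by
    unfold Sfun
    simp_rw [Finset.mul_sum]
    rw [Finset.sum_comm]
    refine Finset.sum_eq_zero fun d hd => ?_
    obtain ⟨hd1, hd2⟩ := Finset.mem_Icc.mp hd
    have h1 : ∀ ρ : ZMod n → ZMod 2,
        uPow n u ρ * ((Finset.univ.filter fun jk : ZMod n × ZMod n =>
          piChar n jk.1 + piChar n (jk.1 + (d : ZMod n)) +
            piChar n jk.2 + piChar n (jk.2 + (d : ZMod n)) = ρ).card : ℝ)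
        = ∑ jk ∈ (Finset.univ.filter fun jk : ZMod n × ZMod n =>
            piChar n jk.1 + piChar n (jk.1 + (d : ZMod n)) +
              piChar n jk.2 + piChar n (jk.2 + (d : ZMod n)) = ρ),
            uPow n u (piChar n jk.1 + piChar n (jk.1 + (d : ZMod n)) +
              piChar n jk.2 + piChar n (jk.2 + (d : ZMod n))) := by
      intro ρ
      rw [Finset.sum_congr rfl (fun jk hjk => by
        rw [(Finset.mem_filter.mp hjk).2]), Finset.sum_const, nsmul_eq_mul, mul_comm]
    simp_rw [h1]
    rw [Finset.sum_fiberwise]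
    have h2 : ∀ jk : ZMod n × ZMod n,
        uPow n u (piChar n jk.1 + piChar n (jk.1 + (d : ZMod n)) +
          piChar n jk.2 + piChar n (jk.2 + (d : ZMod n)))
        = (u jk.1 * u (jk.1 + (d : ZMod n))) * (u jk.2 * u (jk.2 + (d : ZMod n))) := by
      intro jk
      rw [uPow_add n u hu.1, uPow_add n u hu.1, uPow_add n u hu.1,
        uPow_piChar, uPow_piChar, uPow_piChar, uPow_piChar]
      ring
    simp_rw [h2]
    rw [Fintype.sum_prod_type]
    simp_rw [← Finset.mul_sum]
    rw [← Finset.sum_mul]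
    rw [hu.2 d hd1 hd2, zero_mul]
  calc ∑ ρ : ZMod n → ZMod 2, uPow n u (γ + ρ) * Sfun n ρ
      = uPow n u γ * ∑ ρ : ZMod n → ZMod 2, uPow n u ρ * Sfun n ρ := by
        rw [Finset.mul_sum]
        refine Finset.sum_congr rfl fun ρ _ => ?_
        rw [uPow_add n u hu.1, mul_assoc]
    _ = 0 := by rw [key, mul_zero]
end

section
/- Let n be a positive integer. There exists a ±1 vector u : ZMod n → ℝ generating a circulant Hadamard matrix if and only if there exists a function M : (ZMod n → ZMod 2) → ℝ, not identically zero, such that for every γ : ZMod n → ZMod 2 one has ∑_{ρ : ZMod n → ZMod 2} M(γ + ρ) · S(ρ) = 0. -/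
namespace CircHadAux

noncomputable def sg : ZMod 2 → ℝ := fun x => if x = 0 then 1 else -1

lemma zmod2_cases (x : ZMod 2) : x = 0 ∨ x = 1 := by
  fin_cases x
  · exact Or.inl rfl
  · exact Or.inr rfl

lemma sg_zero : sg 0 = 1 := rfl

lemma sg_one : sg 1 = -1 := by norm_num [sg]

lemma sg_add (a b : ZMod 2) : sg (a + b) = sg a * sg b := by
  have h11 : (1 : ZMod 2) + 1 = 0 := by decide
  rcases zmod2_cases a with h | h <;> rcases zmod2_cases b with h' | h' <;>
    subst h <;> subst h' <;>
    simp only [add_zero, zero_add, h11, sg_zero, sg_one] <;> norm_num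

noncomputable def chi (n : ℕ) [NeZero n] (ε γ : ZMod n → ZMod 2) : ℝ :=
  ∏ j, sg (ε j * γ j)

lemma chi_zero (n : ℕ) [NeZero n] (ε : ZMod n → ZMod 2) : chi n ε 0 = 1 := by
  simp [chi, sg_zero]

lemma chi_add (n : ℕ) [NeZero n] (ε γ δ : ZMod n → ZMod 2) :
    chi n ε (γ + δ) = chi n ε γ * chi n ε δ := by
  simp only [chi]
  rw [← Finset.prod_mul_distrib]
  exact Finset.prod_congr rfl fun j _ => by rw [Pi.add_apply, mul_add, sg_add]

lemma neg_self {n : ℕ} (γ : ZMod n → ZMod 2) : γ + γ = 0 := by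
  funext j
  rcases zmod2_cases (γ j) with h | h <;> simp [h] <;> decide

lemma chi_sq (n : ℕ) [NeZero n] (ε ρ : ZMod n → ZMod 2) :
    chi n ε ρ * chi n ε ρ = 1 := by
  rw [← chi_add, neg_self, chi_zero]

lemma chi_pi (n : ℕ) [NeZero n] (ε : ZMod n → ZMod 2) (j : ZMod n) :
    chi n ε (piChar n j) = sg (ε j) := by
  simp only [chi]
  rw [Finset.prod_eq_single j]
  · simp [piChar]
  · intro i _ hi; simp [piChar, hi, sg_zero]
  · intro h; exact absurd (Finset.mem_univ j) h

lemma sum_chi (n : ℕ) [NeZero n] (τ : ZMod n → ZMod 2) :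
    ∑ ε : ZMod n → ZMod 2, chi n ε τ = if τ = 0 then (2 : ℝ) ^ n else 0 := by
  classical
  have huniv : (Finset.univ : Finset (ZMod 2)) = {0, 1} := by decide
  have key : ∑ ε : ZMod n → ZMod 2, chi n ε τ
      = ∏ j : ZMod n, ∑ a : ZMod 2, sg (a * τ j) := by
    simp only [chi]
    rw [Finset.prod_univ_sum, Fintype.piFinset_univ]
  have inner : ∀ j : ZMod n, ∑ a : ZMod 2, sg (a * τ j)
      = if τ j = 0 then (2 : ℝ) else 0 := by
    intro j
    rw [huniv, Finset.sum_insert (by decide), Finset.sum_singleton,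
      zero_mul, one_mul, sg_zero]
    rcases zmod2_cases (τ j) with h | h <;> rw [h] <;> norm_num [sg_zero, sg_one]
  by_cases hτ : τ = 0
  · subst hτ
    rw [if_pos rfl, key]
    have h2 : ∀ j : ZMod n, ∑ a : ZMod 2, sg (a * (0 : ZMod n → ZMod 2) j)
        = (2 : ℝ) := by
      intro j; rw [inner j]; simp
    rw [Finset.prod_congr rfl fun j _ => h2 j, Finset.prod_const,
      Finset.card_univ, ZMod.card]
  · rw [if_neg hτ, key]
    obtain ⟨j, hj⟩ := Function.ne_iff.mp hτ
    have hj' : τ j ≠ 0 := by simpa using hj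
    exact Finset.prod_eq_zero (Finset.mem_univ j) (by rw [inner j, if_neg hj'])

lemma eq_of_hat_zero (n : ℕ) [NeZero n] (M : (ZMod n → ZMod 2) → ℝ)
    (h : ∀ ε, ∑ γ : ZMod n → ZMod 2, M γ * chi n ε γ = 0) : M = 0 := by
  funext δ
  have h1 : ∑ γ : ZMod n → ZMod 2, M γ * (∑ ε : ZMod n → ZMod 2, chi n ε (γ + δ))
      = (2 : ℝ) ^ n * M δ := by
    have hterm : ∀ γ : ZMod n → ZMod 2,
        M γ * (∑ ε : ZMod n → ZMod 2, chi n ε (γ + δ))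
          = if γ = δ then (2 : ℝ) ^ n * M γ else 0 := by
      intro γ
      rw [sum_chi]
      have hiff : γ + δ = 0 ↔ γ = δ := by
        constructor
        · intro hz
          have := congrArg (· + δ) hz
          simpa [add_assoc, neg_self δ] using this
        · intro hz; subst hz; exact neg_self γ
      by_cases hγ : γ = δ
      · rw [if_pos (hiff.mpr hγ), if_pos hγ]; ring
      · rw [if_neg (fun hz => hγ (hiff.mp hz)), if_neg hγ, mul_zero]
    rw [Finset.sum_congr rfl fun γ _ => hterm γ, Finset.sum_ite_eq' Finset.univ δ]
    simp
  have h2 : ∑ γ : ZMod n → ZMod 2, M γ * (∑ ε : ZMod n → ZMod 2, chi n ε (γ + δ))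
      = 0 := by
    simp_rw [Finset.mul_sum, chi_add]
    rw [Finset.sum_comm]
    refine Finset.sum_eq_zero fun ε _ => ?_
    have : ∑ γ : ZMod n → ZMod 2, M γ * (chi n ε γ * chi n ε δ)
        = (∑ γ : ZMod n → ZMod 2, M γ * chi n ε γ) * chi n ε δ := by
      rw [Finset.sum_mul]; exact Finset.sum_congr rfl fun γ _ => by ring
    rw [this, h ε, zero_mul]
  have h3 := h1.symm.trans h2
  have h2n : (2 : ℝ) ^ n ≠ 0 := by positivity
  exact (mul_eq_zero.mp h3).resolve_left h2n

lemma Shat (n : ℕ) [NeZero n] (ε : ZMod n → ZMod 2) :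
    ∑ ρ : ZMod n → ZMod 2, Sfun n ρ * chi n ε ρ
      = ∑ d ∈ Finset.Icc 1 (n - 1),
          (∑ j : ZMod n, sg (ε j) * sg (ε (j + (d : ZMod n)))) ^ 2 := by
  classical
  simp_rw [Sfun, Finset.sum_mul]
  rw [Finset.sum_comm]
  refine Finset.sum_congr rfl fun d _ => ?_
  set K : ZMod n × ZMod n → (ZMod n → ZMod 2) := fun jk =>
    piChar n jk.1 + piChar n (jk.1 + (d : ZMod n)) +
      piChar n jk.2 + piChar n (jk.2 + (d : ZMod n)) with hK
  have step1 : ∑ ρ : ZMod n → ZMod 2,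
      ((Finset.univ.filter fun jk : ZMod n × ZMod n => K jk = ρ).card : ℝ) * chi n ε ρ
        = ∑ jk : ZMod n × ZMod n, chi n ε (K jk) := by
    rw [← Finset.sum_fiberwise' Finset.univ K (chi n ε)]
    refine Finset.sum_congr rfl fun ρ _ => ?_
    rw [Finset.sum_const, nsmul_eq_mul]
  have step2 : ∀ jk : ZMod n × ZMod n, chi n ε (K jk)
      = (sg (ε jk.1) * sg (ε (jk.1 + (d : ZMod n)))) *
        (sg (ε jk.2) * sg (ε (jk.2 + (d : ZMod n)))) := by
    intro jk
    rw [hK]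
    simp only [chi_add, chi_pi]
    ring
  rw [step1, Finset.sum_congr rfl fun jk _ => step2 jk, Fintype.sum_prod_type,
    sq, Finset.sum_mul_sum]

end CircHadAux

open CircHadAux in
/-- There exists a `±1` vector generating a circulant Hadamard matrix of order
`n` if and only if the convolution equation `S ∗ M ≡ 0` has a solution `M`
which is not identically zero. -/
theorem exists_circHadamard_iff_exists_nontrivial_conv_solution
    (n : ℕ) [NeZero n] :
    (∃ u : ZMod n → ℝ, GeneratesCircHadamard n u) ↔
      ∃ M : (ZMod n → ZMod 2) → ℝ, M ≠ 0 ∧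
        ∀ γ : ZMod n → ZMod 2,
          ∑ ρ : ZMod n → ZMod 2, M (γ + ρ) * Sfun n ρ = 0 := by
  constructor
  · rintro ⟨u, hu1, hu2⟩
    classical
    set ε : ZMod n → ZMod 2 := fun j => if u j = 1 then 0 else 1 with hε
    have hue : ∀ j, sg (ε j) = u j := by
      intro j
      rcases hu1 j with h | h
      · simp only [hε]; rw [if_pos h, sg_zero, h]
      · have hne : u j ≠ 1 := by rw [h]; norm_num
        simp only [hε]; rw [if_neg hne, sg_one, h]
    refine ⟨chi n ε, ?_, ?_⟩
    · intro h
      have := congrFun h 0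
      rw [chi_zero] at this
      simpa using this
    · intro γ
      have hterm : ∀ ρ, chi n ε (γ + ρ) * Sfun n ρ
          = chi n ε γ * (Sfun n ρ * chi n ε ρ) := fun ρ => by
        rw [chi_add]; ring
      rw [Finset.sum_congr rfl fun ρ _ => hterm ρ, ← Finset.mul_sum, Shat]
      have hz : ∑ d ∈ Finset.Icc 1 (n - 1),
          (∑ j : ZMod n, sg (ε j) * sg (ε (j + (d : ZMod n)))) ^ 2 = 0 := by
        refine Finset.sum_eq_zero fun d hd => ?_
        rw [Finset.mem_Icc] at hd
        have h0 := hu2 d hd.1 hd.2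
        simp_rw [hue]
        rw [h0]
        norm_num
      rw [hz, mul_zero]
  · rintro ⟨M, hM0, hMeq⟩
    have hex : ¬ ∀ ε, ∑ γ : ZMod n → ZMod 2, M γ * chi n ε γ = 0 := by
      intro h; exact hM0 (eq_of_hat_zero n M h)
    push_neg at hex
    obtain ⟨ε, hε⟩ := hex
    have key : (∑ γ : ZMod n → ZMod 2, M γ * chi n ε γ) *
        (∑ ρ : ZMod n → ZMod 2, Sfun n ρ * chi n ε ρ) = 0 := by
      have h0 : ∑ γ : ZMod n → ZMod 2, chi n ε γ *
          (∑ ρ : ZMod n → ZMod 2, M (γ + ρ) * Sfun n ρ) = 0 := by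
        refine Finset.sum_eq_zero fun γ _ => ?_
        rw [hMeq γ, mul_zero]
      have hswap : ∑ γ : ZMod n → ZMod 2, chi n ε γ *
          (∑ ρ : ZMod n → ZMod 2, M (γ + ρ) * Sfun n ρ)
            = ∑ ρ : ZMod n → ZMod 2, (∑ γ : ZMod n → ZMod 2,
                chi n ε γ * M (γ + ρ)) * Sfun n ρ := by
        simp_rw [Finset.mul_sum]
        rw [Finset.sum_comm]
        refine Finset.sum_congr rfl fun ρ _ => ?_
        rw [Finset.sum_mul]
        exact Finset.sum_congr rfl fun γ _ => by ring
      have hre : ∀ ρ : ZMod n → ZMod 2,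
          ∑ γ : ZMod n → ZMod 2, chi n ε γ * M (γ + ρ)
            = chi n ε ρ * ∑ σ : ZMod n → ZMod 2, M σ * chi n ε σ := by
        intro ρ
        rw [Finset.mul_sum]
        refine Fintype.sum_equiv (Equiv.addRight ρ) _ _ fun σ => ?_
        simp only [Equiv.coe_addRight]
        rw [chi_add]
        have hsq := chi_sq n ε ρ
        linear_combination (-(M (σ + ρ) * chi n ε σ)) * hsq
      rw [hswap, Finset.sum_congr rfl fun ρ _ => by rw [hre ρ]] at h0
      calc (∑ γ : ZMod n → ZMod 2, M γ * chi n ε γ) *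
            (∑ ρ : ZMod n → ZMod 2, Sfun n ρ * chi n ε ρ)
          = ∑ ρ : ZMod n → ZMod 2, chi n ε ρ *
              (∑ σ : ZMod n → ZMod 2, M σ * chi n ε σ) * Sfun n ρ := by
            rw [Finset.mul_sum]
            exact Finset.sum_congr rfl fun ρ _ => by ring
        _ = 0 := h0
    have hShat : ∑ ρ : ZMod n → ZMod 2, Sfun n ρ * chi n ε ρ = 0 :=
      (mul_eq_zero.mp key).resolve_left hε
    rw [Shat] at hShat
    have hsq : ∀ d ∈ Finset.Icc 1 (n - 1),
        (∑ j : ZMod n, sg (ε j) * sg (ε (j + (d : ZMod n)))) ^ 2 = 0 :=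
      (Finset.sum_eq_zero_iff_of_nonneg fun d _ => sq_nonneg _).mp hShat
    refine ⟨fun j => sg (ε j), fun j => ?_, fun d hd1 hd2 => ?_⟩
    · rcases zmod2_cases (ε j) with h | h
      · exact Or.inl (show sg (ε j) = 1 by rw [h, sg_zero])
      · exact Or.inr (show sg (ε j) = -1 by rw [h, sg_one])
    · have h0 := hsq d (Finset.mem_Icc.mpr ⟨hd1, hd2⟩)
      exact pow_eq_zero_iff (by norm_num) |>.mp h0
end

section
/- Let n be a positive integer. There exists a ±1 vector u : ZMod n → ℝ generating a circulant Hadamard matrix if and only if the circulant system admits a solution M : (ZMod n → ZMod 2) → ℝ that is not identically zero. Equivalently, the circulant Hadamard conjecture holds for n (no such vector u exists) if and only if the only solution M of the circulant system is M ≡ 0. -/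
/-- The circulant system of homogeneous linear equations for
`M : (ZMod n → ZMod 2) → ℝ`: for every character `γ` and every
`1 ≤ d ≤ ⌊n/2⌋`, `∑_j M(γ + π_j + π_{j+d}) = 0`. -/
def CirculantSystem (n : ℕ) [NeZero n] (M : (ZMod n → ZMod 2) → ℝ) : Prop :=
  ∀ γ : ZMod n → ZMod 2, ∀ d : ℕ, 1 ≤ d → d ≤ n / 2 →
    ∑ j : ZMod n, M (γ + piChar n j + piChar n (j + (d : ZMod n))) = 0

noncomputable def sgn : ZMod 2 → ℝ := fun x => if x = 0 then 1 else -1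

lemma sgn_values (x : ZMod 2) : sgn x = 1 ∨ sgn x = -1 := by
  unfold sgn; split <;> simp

lemma sgn_mul_add (a b c : ZMod 2) : sgn (a * (b + c)) = sgn (a * b) * sgn (a * c) := by
  have h : ∀ x : ZMod 2, x = 0 ∨ x = 1 := by decide
  rcases h a with rfl | rfl <;> rcases h b with rfl | rfl <;> rcases h c with rfl | rfl <;>
    simp [sgn, show (1 : ZMod 2) + 1 = 0 from rfl, show (1 : ZMod 2) ≠ 0 from by decide]

lemma zmod2_add_self (a : ZMod 2) : a + a = 0 := by fin_cases a <;> decide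

lemma char_add_self {n : ℕ} (f : ZMod n → ZMod 2) : f + f = 0 :=
  funext fun i => zmod2_add_self (f i)

noncomputable def chi (n : ℕ) [NeZero n] (ε γ : ZMod n → ZMod 2) : ℝ := ∏ j, sgn (ε j * γ j)

lemma chi_symm (n : ℕ) [NeZero n] (ε γ : ZMod n → ZMod 2) : chi n ε γ = chi n γ ε :=
  Finset.prod_congr rfl fun j _ => by rw [mul_comm]

lemma chi_add (n : ℕ) [NeZero n] (ε γ δ : ZMod n → ZMod 2) :
    chi n ε (γ + δ) = chi n ε γ * chi n ε δ := by
  unfold chi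
  rw [← Finset.prod_mul_distrib]
  exact Finset.prod_congr rfl fun j _ => by rw [Pi.add_apply]; exact sgn_mul_add _ _ _

lemma chi_zero (n : ℕ) [NeZero n] (ε : ZMod n → ZMod 2) : chi n ε 0 = 1 := by
  simp [chi, sgn]

lemma chi_pi (n : ℕ) [NeZero n] (ε : ZMod n → ZMod 2) (j : ZMod n) :
    chi n ε (piChar n j) = sgn (ε j) := by
  unfold chi
  rw [Finset.prod_eq_single j]
  · simp [piChar]
  · intro i _ hij; simp [piChar, hij, sgn]
  · intro h; exact absurd (Finset.mem_univ j) h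

lemma sum_chi_eq_zero (n : ℕ) [NeZero n] (δ : ZMod n → ZMod 2) (hδ : δ ≠ 0) :
    ∑ ε : ZMod n → ZMod 2, chi n ε δ = 0 := by
  obtain ⟨j0, hj0⟩ := Function.ne_iff.mp hδ
  have hj0' : δ j0 ≠ 0 := by simpa using hj0
  have hs : sgn (δ j0) = -1 := by unfold sgn; rw [if_neg hj0']
  have key : ∀ ε, chi n (ε + piChar n j0) δ = -chi n ε δ := by
    intro ε
    rw [chi_symm n _ δ, chi_add, ← chi_symm n ε δ, ← chi_symm, chi_pi, hs]
    ring
  have h2 : ∑ ε : ZMod n → ZMod 2, chi n (ε + piChar n j0) δ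
      = ∑ ε : ZMod n → ZMod 2, chi n ε δ :=
    Fintype.sum_equiv (Equiv.addRight (piChar n j0)) _ _ (fun ε => rfl)
  have h3 : ∑ ε : ZMod n → ZMod 2, chi n (ε + piChar n j0) δ
      = -∑ ε : ZMod n → ZMod 2, chi n ε δ := by
    rw [Finset.sum_congr rfl fun ε _ => key ε, Finset.sum_neg_distrib]
  linarith [h2, h3]

lemma zmod2_add_eq_zero : ∀ a b : ZMod 2, a + b = 0 → a = b := by decide

lemma char_add_eq_zero {n : ℕ} {γ γ0 : ZMod n → ZMod 2} (h : γ + γ0 = 0) : γ = γ0 :=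
  funext fun i => zmod2_add_eq_zero _ _ (congrFun h i)

lemma sum_chi_pair (n : ℕ) [NeZero n] (γ γ0 : ZMod n → ZMod 2) :
    ∑ ε : ZMod n → ZMod 2, chi n ε (γ + γ0)
      = if γ = γ0 then (Fintype.card (ZMod n → ZMod 2) : ℝ) else 0 := by
  by_cases h : γ = γ0
  · subst h
    rw [if_pos rfl, char_add_self]
    simp [chi_zero]
  · rw [if_neg h]
    exact sum_chi_eq_zero n _ (fun hc => h (char_add_eq_zero hc))

lemma inversion (n : ℕ) [NeZero n] (M : (ZMod n → ZMod 2) → ℝ)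
    (h : ∀ ε, ∑ γ : ZMod n → ZMod 2, M γ * chi n ε γ = 0) : M = 0 := by
  funext γ0
  have h1 : ∑ ε : ZMod n → ZMod 2, (∑ γ : ZMod n → ZMod 2, M γ * chi n ε γ) * chi n ε γ0 = 0 :=
    Finset.sum_eq_zero fun ε _ => by rw [h ε, zero_mul]
  have h2 : ∑ ε : ZMod n → ZMod 2, (∑ γ : ZMod n → ZMod 2, M γ * chi n ε γ) * chi n ε γ0
      = ∑ γ : ZMod n → ZMod 2, M γ * ∑ ε : ZMod n → ZMod 2, chi n ε (γ + γ0) :=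
    calc ∑ ε : ZMod n → ZMod 2, (∑ γ : ZMod n → ZMod 2, M γ * chi n ε γ) * chi n ε γ0
        = ∑ ε : ZMod n → ZMod 2, ∑ γ : ZMod n → ZMod 2, M γ * chi n ε (γ + γ0) := by
          refine Finset.sum_congr rfl fun ε _ => ?_
          rw [Finset.sum_mul]
          exact Finset.sum_congr rfl fun γ _ => by rw [chi_add]; ring
      _ = ∑ γ : ZMod n → ZMod 2, ∑ ε : ZMod n → ZMod 2, M γ * chi n ε (γ + γ0) :=
          Finset.sum_comm
      _ = ∑ γ : ZMod n → ZMod 2, M γ * ∑ ε : ZMod n → ZMod 2, chi n ε (γ + γ0) :=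
          Finset.sum_congr rfl fun γ _ => (Finset.mul_sum _ _ _).symm
  have h3 : ∑ γ : ZMod n → ZMod 2, M γ * ∑ ε : ZMod n → ZMod 2, chi n ε (γ + γ0)
      = M γ0 * (Fintype.card (ZMod n → ZMod 2) : ℝ) := by
    rw [Finset.sum_congr rfl fun γ _ => by rw [sum_chi_pair, mul_ite, mul_zero]]
    simp
  have hcard : (0 : ℝ) < (Fintype.card (ZMod n → ZMod 2) : ℝ) := by
    exact_mod_cast Fintype.card_pos
  have h4 := h1
  rw [h2, h3] at h4
  have h5 : M γ0 = 0 := by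
    rcases mul_eq_zero.mp h4 with h | h
    · exact h
    · exact absurd h (ne_of_gt hcard)
  simpa using h5

lemma corr_symm (n : ℕ) [NeZero n] (u : ZMod n → ℝ) (c : ZMod n) :
    ∑ j : ZMod n, u j * u (j + c) = ∑ j : ZMod n, u j * u (j + -c) := by
  refine Fintype.sum_equiv (Equiv.addRight c) _ _ fun j => ?_
  simp only [Equiv.coe_addRight]
  rw [add_assoc, add_neg_cancel, add_zero, mul_comm]

lemma sys_corr (n : ℕ) [NeZero n] (M : (ZMod n → ZMod 2) → ℝ)
    (hM : CirculantSystem n M) (ε : ZMod n → ZMod 2) (d : ℕ) (h1 : 1 ≤ d) (h2 : d ≤ n / 2) :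
    (∑ j : ZMod n, sgn (ε j) * sgn (ε (j + (d : ZMod n))))
      * (∑ γ : ZMod n → ZMod 2, M γ * chi n ε γ) = 0 := by
  set c := ∑ γ : ZMod n → ZMod 2, M γ * chi n ε γ with hc
  have h0 : ∑ γ : ZMod n → ZMod 2,
      (∑ j : ZMod n, M (γ + piChar n j + piChar n (j + (d : ZMod n)))) * chi n ε γ = 0 :=
    Finset.sum_eq_zero fun γ _ => by rw [hM γ d h1 h2, zero_mul]
  have step : ∀ j : ZMod n,
      ∑ γ : ZMod n → ZMod 2, M (γ + piChar n j + piChar n (j + (d : ZMod n))) * chi n ε γ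
        = (sgn (ε j) * sgn (ε (j + (d : ZMod n)))) * c := by
    intro j
    set s := piChar n j + piChar n (j + (d : ZMod n)) with hs
    have e1 : ∑ γ : ZMod n → ZMod 2, M (γ + piChar n j + piChar n (j + (d : ZMod n))) * chi n ε γ
        = ∑ γ : ZMod n → ZMod 2, M γ * chi n ε (γ + s) := by
      refine Fintype.sum_equiv (Equiv.addRight s) _ _ fun γ => ?_
      simp only [Equiv.coe_addRight]
      rw [add_assoc γ, ← hs]
      congr 2
      · rw [add_assoc, char_add_self, add_zero]
    rw [e1]
    have e2 : ∀ γ : ZMod n → ZMod 2,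
        M γ * chi n ε (γ + s) = (sgn (ε j) * sgn (ε (j + (d : ZMod n)))) * (M γ * chi n ε γ) := by
      intro γ
      rw [hs, ← add_assoc, chi_add, chi_add, chi_pi, chi_pi]
      ring
    rw [Finset.sum_congr rfl fun γ _ => e2 γ, ← Finset.mul_sum]
  have h0' : ∑ j : ZMod n, (sgn (ε j) * sgn (ε (j + (d : ZMod n)))) * c = 0 := by
    rw [← Finset.sum_congr rfl fun j _ => step j, ← Finset.sum_comm]
    rw [← h0]
    exact Finset.sum_congr rfl fun γ _ => (Finset.sum_mul _ _ _).symm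
  rw [Finset.sum_mul]
  rw [← h0']

/-- A circulant Hadamard matrix of order `n` exists if and only if the
circulant system admits a solution which is not identically zero;
equivalently, no circulant Hadamard matrix of order `n` exists if and only if
the only solution of the circulant system is the zero function. -/
theorem exists_circHadamard_iff_exists_nontrivial_solution
    (n : ℕ) [NeZero n] :
    ((∃ u : ZMod n → ℝ, GeneratesCircHadamard n u) ↔
        ∃ M : (ZMod n → ZMod 2) → ℝ, M ≠ 0 ∧ CirculantSystem n M) ∧
      ((¬ ∃ u : ZMod n → ℝ, GeneratesCircHadamard n u) ↔
        ∀ M : (ZMod n → ZMod 2) → ℝ, CirculantSystem n M → M = 0) := by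
  have main : (∃ u : ZMod n → ℝ, GeneratesCircHadamard n u) ↔
      ∃ M : (ZMod n → ZMod 2) → ℝ, M ≠ 0 ∧ CirculantSystem n M := by
    constructor
    · rintro ⟨u, hu1, hu2⟩
      set ε : ZMod n → ZMod 2 := fun j => if u j = 1 then 0 else 1 with hε
      have hue : ∀ j, sgn (ε j) = u j := by
        intro j
        rcases hu1 j with h | h
        · simp [hε, h, sgn]
        · have hne : u j ≠ 1 := by rw [h]; norm_num
          simp [hε, hne, h, sgn]
          exact fun hc => absurd hc (by norm_num)
      refine ⟨chi n ε, ?_, ?_⟩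
      · intro h
        have h0 := congrFun h 0
        rw [chi_zero] at h0
        simpa using h0
      · intro γ d hd1 hd2
        have hdn : d ≤ n - 1 := by omega
        have key := hu2 d hd1 hdn
        have hterm : ∀ j : ZMod n, chi n ε (γ + piChar n j + piChar n (j + (d : ZMod n)))
            = chi n ε γ * (u j * u (j + (d : ZMod n))) := by
          intro j
          rw [chi_add, chi_add, chi_pi, chi_pi, hue, hue]
          ring
        rw [Finset.sum_congr rfl fun j _ => hterm j, ← Finset.mul_sum, key, mul_zero]
    · rintro ⟨M, hM0, hMs⟩
      have hex : ∃ ε : ZMod n → ZMod 2, ∑ γ : ZMod n → ZMod 2, M γ * chi n ε γ ≠ 0 := by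
        by_contra h
        push_neg at h
        exact hM0 (inversion n M h)
      obtain ⟨ε, hεne⟩ := hex
      refine ⟨fun j => sgn (ε j), fun j => sgn_values _, ?_⟩
      have key : ∀ e : ℕ, 1 ≤ e → e ≤ n / 2 →
          ∑ j : ZMod n, sgn (ε j) * sgn (ε (j + (e : ZMod n))) = 0 := by
        intro e he1 he2
        rcases mul_eq_zero.mp (sys_corr n M hMs ε e he1 he2) with h | h
        · exact h
        · exact absurd h hεne
      intro d hd1 hd2
      by_cases hd : d ≤ n / 2
      · exact key d hd1 hd
      · have h1 : 1 ≤ n - d := by omega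
        have h2 : n - d ≤ n / 2 := by omega
        have hcast : ((d : ℕ) : ZMod n) = -(((n - d : ℕ)) : ZMod n) := by
          have hdn : d ≤ n := by omega
          rw [Nat.cast_sub hdn, ZMod.natCast_self, zero_sub, neg_neg]
        calc ∑ j : ZMod n, sgn (ε j) * sgn (ε (j + (d : ZMod n)))
            = ∑ j : ZMod n, sgn (ε j) * sgn (ε (j + -(((n - d : ℕ)) : ZMod n))) := by
              rw [hcast]
          _ = ∑ j : ZMod n, sgn (ε j) * sgn (ε (j + (((n - d : ℕ)) : ZMod n))) :=
              (corr_symm n (fun j => sgn (ε j)) _).symm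
          _ = 0 := key (n - d) h1 h2
  refine ⟨main, ?_⟩
  rw [main]
  constructor
  · intro h M hMs
    by_contra hne
    exact h ⟨M, hne, hMs⟩
  · rintro h ⟨M, hne, hMs⟩
    exact hne (h M hMs)
end

section
/- Let n be a positive integer and let k be an integer coprime to n, so that τ_k : ZMod n → ZMod n, τ_k(j) = k·j, is a bijection. If M : (ZMod n → ZMod 2) → ℝ satisfies the circulant system, then the function M_k defined by M_k(γ) = M(γ ∘ τ_k) also satisfies the circulant system. -/
lemma circ_aux (n : ℕ) [NeZero n] (M : (ZMod n → ZMod 2) → ℝ)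
    (hM : CirculantSystem n M) (γ : ZMod n → ZMod 2) (e : ZMod n) (he : e ≠ 0) :
    ∑ j : ZMod n, M (γ + piChar n j + piChar n (j + e)) = 0 := by
  set m := e.val with hm
  have hme : (m : ZMod n) = e := ZMod.natCast_zmod_val e
  have hm1 : 1 ≤ m := Nat.one_le_iff_ne_zero.mpr (by
    simpa [hm, ZMod.val_eq_zero] using he)
  have hmn : m < n := ZMod.val_lt e
  by_cases h : m ≤ n / 2
  · have := hM γ m hm1 h
    rwa [hme] at this
  · have h1 : 1 ≤ n - m := by omega
    have h2 : n - m ≤ n / 2 := by omega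
    have key := hM γ (n - m) h1 h2
    have hcast : ((n - m : ℕ) : ZMod n) = -e := by
      rw [Nat.cast_sub hmn.le, ZMod.natCast_self, hme]; ring
    rw [hcast] at key
    rw [← key]
    refine Fintype.sum_equiv (Equiv.addRight e) _ _ fun j => ?_
    simp only [Equiv.coe_addRight, add_neg_cancel_right]
    rw [add_right_comm]

/-- If `k` is coprime to `n` (so that `τ_k : j ↦ k·j` is a bijection of
`ZMod n`) and `M` satisfies the circulant system, then so does
`M_k(γ) = M(γ ∘ τ_k)`. -/
theorem circulantSystem_mul_coprime (n : ℕ) [NeZero n] (k : ℤ)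
    (hk : IsCoprime k (n : ℤ))
    (M : (ZMod n → ZMod 2) → ℝ) (hM : CirculantSystem n M) :
    CirculantSystem n (fun γ => M (fun j => γ ((k : ZMod n) * j))) := by
  have hc : IsUnit ((k : ZMod n)) := by
    have := hk.map (Int.castRingHom (ZMod n))
    exact isCoprime_zero_right.mp (by simpa using this)
  obtain ⟨u, hu⟩ := hc
  intro γ d hd1 hd2
  have hpi : ∀ (j i : ZMod n),
      piChar n j ((k : ZMod n) * i) = piChar n ((↑u⁻¹ : ZMod n) * j) i := by
    intro j i
    simp only [piChar, ← hu]
    congr 1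
    exact propext ⟨fun h => (Units.eq_inv_mul_iff_mul_eq u).mpr h,
      fun h => (Units.eq_inv_mul_iff_mul_eq u).mp h⟩
  have hterm : ∀ j : ZMod n,
      (fun i => (γ + piChar n j + piChar n (j + (d : ZMod n))) ((k : ZMod n) * i))
      = (fun i => γ ((k : ZMod n) * i)) + piChar n ((↑u⁻¹ : ZMod n) * j)
          + piChar n ((↑u⁻¹ : ZMod n) * j + (↑u⁻¹ : ZMod n) * (d : ZMod n)) := by
    intro j
    funext i
    simp only [Pi.add_apply, hpi, mul_add]
  calc ∑ j : ZMod n,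
        M (fun i => (γ + piChar n j + piChar n (j + (d : ZMod n))) ((k : ZMod n) * i))
      = ∑ j : ZMod n, M ((fun i => γ ((k : ZMod n) * i)) + piChar n ((↑u⁻¹ : ZMod n) * j)
          + piChar n ((↑u⁻¹ : ZMod n) * j + (↑u⁻¹ : ZMod n) * (d : ZMod n))) := by
        refine Finset.sum_congr rfl fun j _ => ?_
        rw [hterm j]
    _ = ∑ j : ZMod n, M ((fun i => γ ((k : ZMod n) * i)) + piChar n j
          + piChar n (j + (↑u⁻¹ : ZMod n) * (d : ZMod n))) := by
        refine (Fintype.sum_equiv (Units.mulLeft u) _ _ fun j => ?_).symm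
        simp [Units.mulLeft, ← mul_assoc]
    _ = 0 := by
        apply circ_aux n M hM
        intro h0
        have hd : ((d : ℕ) : ZMod n) ≠ 0 := by
          rw [Ne, ZMod.natCast_eq_zero_iff]
          intro hdvd
          have := Nat.le_of_dvd (by omega) hdvd
          have : n / 2 < n := Nat.div_lt_self (Nat.pos_of_ne_zero (NeZero.ne n)) one_lt_two
          omega
        apply hd
        have : (↑u : ZMod n) * ((↑u⁻¹ : ZMod n) * (d : ZMod n)) = 0 := by rw [h0, mul_zero]
        rwa [← mul_assoc, Units.mul_inv, one_mul] at this
end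

section
/- Let n be an integer with n > 1. If there exists a ±1 vector u : ZMod n → ℝ generating a circulant Hadamard matrix, then n = 4u² for some positive integer u; in particular, n is an even perfect square. -/
/-- If `n > 1` and a `±1` vector generates a circulant Hadamard matrix of
order `n`, then `n = 4k²` for some positive integer `k`; in particular `n` is
an even perfect square. -/
theorem circHadamard_order_eq_four_mul_sq (n : ℕ) [NeZero n] (hn : 1 < n)
    (h : ∃ u : ZMod n → ℝ, GeneratesCircHadamard n u) :
    (∃ k : ℕ, 0 < k ∧ n = 4 * k ^ 2) ∧ Even n ∧ ∃ m : ℕ, n = m ^ 2 := by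
  classical
  obtain ⟨u, hu, horth⟩ := h
  -- integer version of u
  set f : ZMod n → ℤ := fun j => if u j = 1 then 1 else -1 with hfdef
  have hfu : ∀ j, (f j : ℝ) = u j := by
    intro j
    rcases hu j with h1 | h1 <;> simp [hfdef, h1] <;> norm_num
  have hf : ∀ j, f j = 1 ∨ f j = -1 := by
    intro j
    by_cases h1 : u j = 1 <;> simp [hfdef, h1]
  have hsq : ∀ j, f j * f j = 1 := by
    intro j; rcases hf j with h1 | h1 <;> rw [h1] <;> norm_num
  have horthZ : ∀ d : ℕ, 1 ≤ d → d ≤ n - 1 →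
      ∑ j : ZMod n, f j * f (j + (d : ZMod n)) = 0 := by
    intro d h1 h2
    have hr := horth d h1 h2
    have : ((∑ j : ZMod n, f j * f (j + (d : ZMod n)) : ℤ) : ℝ)
        = ∑ j : ZMod n, u j * u (j + (d : ZMod n)) := by
      push_cast
      exact Finset.sum_congr rfl fun j _ => by rw [hfu, hfu]
    exact_mod_cast this.trans hr
  -- Step A : (∑ f)² = n
  have key : (∑ j : ZMod n, f j) ^ 2 = (n : ℤ) := by
    have e1 : (∑ j : ZMod n, f j) ^ 2
        = ∑ j : ZMod n, ∑ d : ZMod n, f j * f (j + d) := by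
      rw [sq, Finset.sum_mul_sum]
      refine Finset.sum_congr rfl fun j _ => ?_
      exact (Fintype.sum_equiv (Equiv.addLeft j) (fun d => f j * f (j + d))
        (fun k => f j * f k) fun d => by simp [add_comm]).symm
    rw [e1, Finset.sum_comm]
    have e2 : ∀ d : ZMod n, d ≠ 0 → ∑ j : ZMod n, f j * f (j + d) = 0 := by
      intro d hd
      have hv : (d.val : ZMod n) = d := ZMod.natCast_rightInverse d
      have h1 : 1 ≤ d.val := Nat.one_le_iff_ne_zero.mpr (by
        simpa [ZMod.val_eq_zero] using hd)
      have h2 : d.val ≤ n - 1 := by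
        have := ZMod.val_lt d; omega
      have := horthZ d.val h1 h2
      rwa [hv] at this
    rw [Fintype.sum_eq_single (0 : ZMod n) e2]
    simp [hsq, Finset.card_univ, ZMod.card]
  -- Step C : 4 ∣ n
  have hn3 : 3 ≤ n := by
    rcases Nat.lt_or_ge n 3 with h3 | h3
    · -- n = 2 : impossible since then (∑ f)² = 2
      interval_cases n
      exfalso
      obtain ⟨s, hs2⟩ : ∃ s : ℤ, s ^ 2 = 2 := ⟨_, key⟩
      have h1 : -2 < s := by nlinarith [sq_nonneg (s + 2)]
      have h2 : s < 2 := by nlinarith [sq_nonneg (s - 2)]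
      interval_cases s <;> omega
    · exact h3
  have hdvd4 : (4 : ℤ) ∣ (n : ℤ) := by
    have s1 : ∑ j : ZMod n, f j * f (j + (1 : ZMod n)) = 0 := by
      have := horthZ 1 le_rfl (by omega)
      simpa using this
    have s2 : ∑ j : ZMod n, f j * f (j + (2 : ZMod n)) = 0 := by
      have := horthZ 2 (by omega) (by omega)
      simpa using this
    have s3 : ∑ j : ZMod n, f (j + 1) * f (j + 2) = 0 := by
      have := Fintype.sum_equiv (Equiv.addRight (1 : ZMod n))
        (fun j : ZMod n => f (j + 1) * f (j + 2))
        (fun j : ZMod n => f j * f (j + 1)) (fun j => by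
          simp only [Equiv.coe_addRight]
          ring_nf)
      rw [this, s1]
    have expand : ∑ j : ZMod n, (1 + f j * f (j + 1)) * (1 + f j * f (j + 2))
        = (n : ℤ) := by
      have : ∀ j : ZMod n, (1 + f j * f (j + 1)) * (1 + f j * f (j + 2))
          = 1 + f j * f (j + 1) + f j * f (j + 2) + f (j + 1) * f (j + 2) := by
        intro j
        rcases hf j with h1 | h1 <;> rw [h1] <;> ring
      rw [Finset.sum_congr rfl fun j _ => this j]
      rw [Finset.sum_add_distrib, Finset.sum_add_distrib, Finset.sum_add_distrib,
        s1, s2, s3]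
      simp [Finset.card_univ, ZMod.card]
    have : (4 : ℤ) ∣ ∑ j : ZMod n, (1 + f j * f (j + 1)) * (1 + f j * f (j + 2)) := by
      refine Finset.dvd_sum fun j _ => ?_
      rcases hf j with h1 | h1 <;> rcases hf (j + 1) with h2 | h2 <;>
        rcases hf (j + 2) with h3 | h3 <;> rw [h1, h2, h3] <;> norm_num
    rwa [expand] at this
  -- wrap up
  set s : ℤ := ∑ j : ZMod n, f j with hsdef
  have hseven : Even s := by
    obtain ⟨t, ht⟩ := hdvd4
    have h2 : Even (s ^ 2) := ⟨2 * t, by rw [key, ht]; ring⟩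
    exact (Int.even_pow.mp h2).1
  set m : ℕ := s.natAbs with hmdef
  have hnmZ : ((m : ℤ)) ^ 2 = (n : ℤ) := by
    rw [hmdef, Int.natCast_natAbs, sq_abs]; exact key
  have hnm : n = m ^ 2 := by exact_mod_cast hnmZ.symm
  have hmeven : Even m := by
    obtain ⟨t, ht⟩ := hseven
    refine ⟨t.natAbs, ?_⟩
    rw [hmdef, ht, ← two_mul, Int.natAbs_mul]
    simp [two_mul]
  obtain ⟨k, hk⟩ := hmeven
  have hmpos : 0 < m := by
    rcases Nat.eq_zero_or_pos m with h0 | h0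
    · rw [h0] at hnm; omega
    · exact h0
  refine ⟨⟨k, by omega, by rw [hnm, hk]; ring⟩, ?_, ⟨m, hnm⟩⟩
  have h4n : (4 : ℕ) ∣ n := by exact_mod_cast hdvd4
  obtain ⟨t, ht⟩ := h4n
  exact ⟨2 * t, by omega⟩
end
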